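/- For q = p^l a power of a prime p, the symmetric Pascal matrix P(q) satisfies P(q)^3 ≡ I (mod p), i.e., P(q) has order dividing 3 over 𝔽_p. -/

import Mathlib

open Finset PowerSeries
set_option maxRecDepth 4000

lemma coeff_term (R : Type*) [CommRing R] (m i k c : ℕ) :
    (PowerSeries.coeff (R := R) i) ((-X)^k * 1^(m-k) * (c : R⟦X⟧)) =
      if i = k then ((-1:R))^i * c else 0 := by
  have h : ((-X : R⟦X⟧))^k * 1^(m-k) * (c : R⟦X⟧) = PowerSeries.C (R := R) ((-1)^k * c) * X^k := by
    rw [map_mul, map_pow, map_neg, map_one, map_natCast, one_pow, mul_one, neg_pow]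
    ring
  rw [h, coeff_C_mul, coeff_X_pow, mul_ite, mul_one, mul_zero]
  split_ifs with hik
  · subst hik; rfl
  · rfl

lemma coeff_one_sub_X_pow (R : Type*) [CommRing R] (m i : ℕ) :
    (PowerSeries.coeff (R := R) i) ((1 - X)^m) = ((-1:R))^i * (m.choose i) := by
  rw [sub_eq_add_neg, add_comm, add_pow, map_sum]
  rw [Finset.sum_eq_single i]
  · rw [coeff_term, if_pos rfl]
  · intro k _ hne; rw [coeff_term, if_neg (Ne.symm hne)]
  · intro h
    simp only [mem_range, not_lt] at h
    rw [Nat.choose_eq_zero_of_lt (by omega), Nat.cast_zero, mul_zero]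
    simp

lemma key_congr (p : ℕ) [Fact p.Prime] (l i j : ℕ) (hi : i < p^l) (hj : j < p^l) :
    (((i+j).choose i : ℕ) : ZMod p) = ((-1:ZMod p))^i * ((p^l - 1 - j).choose i) := by
  haveI : CharP ((ZMod p)⟦X⟧) p :=
    charP_of_injective_ringHom (PowerSeries.C_injective (R := ZMod p)) p
  have h1 : (PowerSeries.mk fun n => ((j+n).choose j : ZMod p)) * (1 - X)^(j+1) = 1 :=
    PowerSeries.mk_add_choose_mul_one_sub_pow_eq_one (ZMod p) j
  have h2 : ((1:(ZMod p)⟦X⟧) - X)^(p^l) = 1 - X^(p^l) := by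
    rw [sub_pow_char_pow_of_commute p l (Commute.one_left X), one_pow]
  have h3 : ((1:(ZMod p)⟦X⟧) - X)^(p^l - 1 - j) =
      (1 - X^(p^l)) * PowerSeries.mk (fun n => ((j+n).choose j : ZMod p)) := by
    calc ((1:(ZMod p)⟦X⟧) - X)^(p^l - 1 - j)
        = (1-X)^(p^l - 1 - j) * ((PowerSeries.mk fun n => ((j+n).choose j : ZMod p)) * (1-X)^(j+1)) := by
          rw [h1, mul_one]
      _ = (1 - X^(p^l)) * PowerSeries.mk (fun n => ((j+n).choose j : ZMod p)) := by
          rw [← h2, ← mul_assoc, mul_comm ((1-X:(ZMod p)⟦X⟧)^(p^l -1 -j)), mul_assoc, ← pow_add]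
          rw [show p^l - 1 - j + (j+1) = p^l by omega]
          ring
  have h4 := congrArg (PowerSeries.coeff (R := ZMod p) i) h3
  rw [coeff_one_sub_X_pow, sub_mul, one_mul, map_sub, PowerSeries.coeff_mk,
    PowerSeries.coeff_X_pow_mul' , if_neg (by omega), sub_zero] at h4
  rw [h4]
  exact congrArg _ (by rw [Nat.choose_symm_add, Nat.add_comm i j])
open Finset

-- Nat Vandermonde, truncated sum
lemma vander (i j q : ℕ) (hi : i < q) :
    ∑ k ∈ range q, (Nat.choose i k) * (Nat.choose j k) = Nat.choose (i+j) i := by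
  have h1 : ∑ k ∈ range q, (Nat.choose i k) * (Nat.choose j k)
      = ∑ k ∈ range (i+1), (Nat.choose i k) * (Nat.choose j k) := by
    symm
    apply Finset.sum_subset
    · intro x hx; simp only [mem_range] at *; omega
    · intro x _ hx; simp only [mem_range, not_lt] at hx
      rw [Nat.choose_eq_zero_of_lt (by omega), zero_mul]
  have hr := Finset.sum_range_reflect (fun k => i.choose k * j.choose (i - k)) (i+1)
  rw [h1, Nat.add_choose_eq, Finset.Nat.sum_antidiagonal_eq_sum_range_succ_mk, ← hr]
  apply Finset.sum_congr rfl
  intro k hk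
  simp only [mem_range] at hk
  have hk' : k ≤ i := by omega
  rw [show i + 1 - 1 - k = i - k by omega, show i - (i - k) = k by omega,
    Nat.choose_symm hk']

-- alternating binomial inversion, over a commutative ring
lemma alt_sum (R : Type*) [CommRing R] (n : ℕ) :
    ∑ m ∈ range (n + 1), ((-1:R)) ^ m * (n.choose m) = if n = 0 then 1 else 0 := by
  have h := Int.alternating_sum_range_choose (n := n)
  have h2 := congrArg (fun z : ℤ => (z : R)) h
  push_cast at h2
  rw [h2]

lemma ring_ident (R : Type*) [CommRing R] (i j q : ℕ) (hj : j < q) :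
    ∑ k ∈ range q, ((-1:R))^(i+k) * ((Nat.choose k i) * (Nat.choose j k))
      = if i = j then 1 else 0 := by
  have h1 : ∑ k ∈ range q, ((-1:R))^(i+k) * ((Nat.choose k i) * (Nat.choose j k))
      = ∑ k ∈ Ico i (j+1), ((-1:R))^(i+k) * ((Nat.choose k i) * (Nat.choose j k)) := by
    symm
    apply Finset.sum_subset
    · intro x hx; simp only [mem_Ico, mem_range] at *; omega
    · intro x hx hx'; simp only [mem_range, mem_Ico, not_and_or, not_le, not_lt] at hx hx'
      rcases hx' with h' | h'
      · rw [Nat.choose_eq_zero_of_lt h', Nat.cast_zero, zero_mul, mul_zero]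
      · rw [Nat.choose_eq_zero_of_lt h', Nat.cast_zero, mul_zero, mul_zero]
  rw [h1]
  by_cases hij : i ≤ j
  · rw [Finset.sum_Ico_eq_sum_range]
    rw [show j + 1 - i = (j - i) + 1 by omega]
    have h2 : ∀ m ∈ range ((j-i)+1), ((-1:R))^(i+(i+m)) * ((Nat.choose (i+m) i) * (Nat.choose j (i+m)))
        = (Nat.choose j i : R) * ((-1:R)^m * (Nat.choose (j-i) m)) := by
      intro m hm
      simp only [mem_range] at hm
      have hc : Nat.choose j (i+m) * Nat.choose (i+m) i
          = Nat.choose j i * Nat.choose (j - i) (i + m - i) :=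
        Nat.choose_mul (by omega)
      rw [show i + m - i = m by omega] at hc
      have hsgn : ((-1:R))^(i+(i+m)) = (-1:R)^m := by
        rw [show i+(i+m) = 2*i + m by omega, pow_add, pow_mul, neg_one_sq, one_pow, one_mul]
      rw [hsgn, mul_comm ((Nat.choose (i+m) i : R)), ← Nat.cast_mul, hc]
      push_cast
      ring
    rw [Finset.sum_congr rfl h2, ← Finset.mul_sum, alt_sum]
    by_cases hij' : i = j
    · subst hij'; simp
    · rw [if_neg (by omega), if_neg hij', mul_zero]
  · rw [if_neg (by omega)]
    apply Finset.sum_eq_zero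
    intro x hx
    simp only [mem_Ico] at hx
    rw [Nat.choose_eq_zero_of_lt (by omega), Nat.cast_zero, zero_mul, mul_zero]

namespace PascalCube
open Matrix

variable (p q : ℕ)

def Sm : Matrix (Fin q) (Fin q) (ZMod p) :=
  Matrix.of fun i j => (-1)^(i:ℕ) * (((j:ℕ).choose (i:ℕ) : ℕ) : ZMod p)

def Jm : Matrix (Fin q) (Fin q) (ZMod p) :=
  Matrix.of fun i j => if (i:ℕ) + (j:ℕ) = q - 1 then 1 else 0

def Pm : Matrix (Fin q) (Fin q) (ZMod p) :=
  Matrix.of fun i j => ((((i:ℕ) + (j:ℕ)).choose (i:ℕ) : ℕ) : ZMod p)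

lemma Sm_mul_Sm : Sm p q * Sm p q = 1 := by
  ext i j
  rw [Matrix.mul_apply, Matrix.one_apply]
  have hterm : ∀ k : Fin q, Sm p q i k * Sm p q k j
      = (-1:ZMod p)^((i:ℕ)+(k:ℕ)) * (((k:ℕ).choose (i:ℕ) : ZMod p) * (((j:ℕ).choose (k:ℕ) : ZMod p))) := by
    intro k; simp only [Sm, Matrix.of_apply]; rw [pow_add]; ring
  rw [Finset.sum_congr rfl (fun k _ => hterm k),
    Fin.sum_univ_eq_sum_range (fun k => (-1:ZMod p)^((i:ℕ)+k) * ((k.choose (i:ℕ) : ZMod p) * (((j:ℕ).choose k : ZMod p)))),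
    ring_ident (ZMod p) (i:ℕ) (j:ℕ) q j.isLt]
  by_cases h : i = j
  · subst h; rw [if_pos rfl, if_pos rfl]
  · rw [if_neg (fun hn => h (Fin.ext hn)), if_neg h]

lemma Jm_mul_Jm (hq : 0 < q) : Jm p q * Jm p q = 1 := by
  ext i j
  have hi := i.isLt; have hj := j.isLt
  rw [Matrix.mul_apply, Matrix.one_apply]
  rw [Finset.sum_eq_single (⟨q - 1 - (j:ℕ), by omega⟩ : Fin q)]
  · simp only [Jm, Matrix.of_apply]
    by_cases h : i = j
    · subst h; rw [if_pos (by omega), if_pos (by omega), if_pos rfl, one_mul]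
    · have h' : (i:ℕ) ≠ (j:ℕ) := fun hn => h (Fin.ext hn)
      rw [if_neg (by omega), if_neg h, zero_mul]
  · intro k _ hk
    have hkv : (k:ℕ) ≠ q - 1 - (j:ℕ) := fun h => hk (Fin.ext h)
    simp only [Jm, Matrix.of_apply]
    have h0 : (if (k:ℕ) + (j:ℕ) = q - 1 then (1:ZMod p) else 0) = 0 :=
      if_neg (fun hn => hkv (by omega))
    rw [h0, mul_zero]
  · intro h; exact absurd (Finset.mem_univ _) h

lemma Jm_transpose : (Jm p q)ᵀ = Jm p q := by
  ext i j
  simp only [Matrix.transpose_apply, Jm, Matrix.of_apply]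
  by_cases h : (i:ℕ) + (j:ℕ) = q - 1
  · rw [if_pos (by omega), if_pos h]
  · rw [if_neg (by omega), if_neg h]

lemma Pm_transpose : (Pm p q)ᵀ = Pm p q := by
  ext i j
  simp only [Matrix.transpose_apply, Pm, Matrix.of_apply]
  exact congrArg _ (by rw [Nat.choose_symm_add, Nat.add_comm j i])

lemma SmT_mul_Sm : (Sm p q)ᵀ * Sm p q = Pm p q := by
  ext i j
  rw [Matrix.mul_apply]
  have hterm : ∀ k : Fin q, (Sm p q)ᵀ i k * Sm p q k j
      = (((i:ℕ).choose (k:ℕ) * (j:ℕ).choose (k:ℕ) : ℕ) : ZMod p) := by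
    intro k
    simp only [Sm, Matrix.transpose_apply, Matrix.of_apply]
    have h1 : ((-1:ZMod p)^(k:ℕ)) * ((-1:ZMod p)^(k:ℕ)) = 1 := by
      rw [← mul_pow, neg_mul_neg, one_mul, one_pow]
    push_cast
    calc (-1:ZMod p)^(k:ℕ) * ((i:ℕ).choose (k:ℕ) : ZMod p) * ((-1:ZMod p)^(k:ℕ) * ((j:ℕ).choose (k:ℕ) : ZMod p))
        = ((-1:ZMod p)^(k:ℕ) * ((-1:ZMod p)^(k:ℕ))) * (((i:ℕ).choose (k:ℕ) : ZMod p) * ((j:ℕ).choose (k:ℕ) : ZMod p)) := by ring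
      _ = ((i:ℕ).choose (k:ℕ) : ZMod p) * ((j:ℕ).choose (k:ℕ) : ZMod p) := by rw [h1, one_mul]
  rw [Finset.sum_congr rfl (fun k _ => hterm k),
    Fin.sum_univ_eq_sum_range (fun k => (((i:ℕ).choose k * (j:ℕ).choose k : ℕ) : ZMod p))]
  rw [← Nat.cast_sum, vander (i:ℕ) (j:ℕ) q i.isLt]
  rfl

lemma Pm_eq_Sm_mul_Jm [Fact p.Prime] (l : ℕ) :
    Pm p (p^l) = Sm p (p^l) * Jm p (p^l) := by
  have hq : 0 < p^l := pow_pos (Fact.out : p.Prime).pos l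
  ext i j
  have hi := i.isLt; have hj := j.isLt
  rw [Matrix.mul_apply]
  rw [Finset.sum_eq_single (⟨p^l - 1 - (j:ℕ), by omega⟩ : Fin (p^l))]
  · simp only [Sm, Jm, Pm, Matrix.of_apply]
    rw [if_pos (by omega), mul_one]
    exact key_congr p l (i:ℕ) (j:ℕ) hi hj
  · intro k _ hk
    have hkv : (k:ℕ) ≠ p^l - 1 - (j:ℕ) := fun h => hk (Fin.ext h)
    simp only [Jm, Matrix.of_apply]
    have h0 : (if (k:ℕ) + (j:ℕ) = p^l - 1 then (1:ZMod p) else 0) = 0 :=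
      if_neg (fun hn => hkv (by omega))
    rw [h0, mul_zero]
  · intro h; exact absurd (Finset.mem_univ _) h

end PascalCube

open PascalCube Matrix

/-- For `q = p^l` a prime power, the symmetric Pascal matrix over `𝔽_p`
satisfies `P(q)^3 = 1`. -/
theorem pascal_prime_power_cube_eq_one (p : ℕ) [Fact p.Prime] (l : ℕ) :
    (Matrix.of fun i j : Fin (p ^ l) => ((Nat.choose (i + j) i : ZMod p))) ^ 3 = 1 := by
  have hq : 0 < p^l := pow_pos (Fact.out : p.Prime).pos l
  have hP : (Matrix.of fun i j : Fin (p ^ l) => ((Nat.choose (i + j) i : ZMod p))) = Pm p (p^l) := rfl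
  rw [hP]
  have e1 : Pm p (p^l) = Sm p (p^l) * Jm p (p^l) := Pm_eq_Sm_mul_Jm p l
  have e2 : Pm p (p^l) = Jm p (p^l) * (Sm p (p^l))ᵀ := by
    conv_lhs => rw [← Pm_transpose, e1]
    rw [Matrix.transpose_mul, Jm_transpose]
  have hSS := Sm_mul_Sm p (p^l)
  have hJJ := Jm_mul_Jm p (p^l) hq
  have hV := SmT_mul_Sm p (p^l)
  calc (Pm p (p^l))^3 = Pm p (p^l) * Pm p (p^l) * Pm p (p^l) := by
        rw [pow_succ, pow_succ, pow_one]
    _ = (Sm p (p^l) * Jm p (p^l)) * (Jm p (p^l) * (Sm p (p^l))ᵀ) * (Sm p (p^l) * Jm p (p^l)) := by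
        rw [← e1, ← e2]
    _ = Sm p (p^l) * (Jm p (p^l) * Jm p (p^l)) * ((Sm p (p^l))ᵀ * Sm p (p^l)) * Jm p (p^l) := by
        simp only [Matrix.mul_assoc]
    _ = Sm p (p^l) * Pm p (p^l) * Jm p (p^l) := by rw [hJJ, hV, Matrix.mul_one]
    _ = Sm p (p^l) * Sm p (p^l) * (Jm p (p^l) * Jm p (p^l)) := by
        rw [e1]; simp only [Matrix.mul_assoc]
    _ = 1 := by rw [hSS, hJJ, Matrix.one_mul]
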